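/- Define T(g,a)_{i,j} = (ag)^{i+j} · Σ_{k=0}^{min(i,j)} C(i,k)·C(j,k)·a^{-2k} for i,j ≥ 0, where a is an invertible element. Then the double generating function satisfies Σ_{i,j≥0} T(g,a)_{i,j} u^i v^j = 1 / (1 − g·a·(u+v) − g²·(1−a²)·u·v) as an identity of formal power series in u and v. -/

import Mathlib

open MvPowerSeries

open Finset in

lemma S_ext {K : Type*} [Field K] (b : K) (i j n : ℕ) (hn : min i j + 1 ≤ n) :
    ∑ k ∈ range (min i j + 1), ((i.choose k : K) * (j.choose k : K)) * b ^ k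
      = ∑ k ∈ range n, ((i.choose k : K) * (j.choose k : K)) * b ^ k := by
  apply Finset.sum_subset
  · exact Finset.range_subset_range.2 hn
  · intro k _ hk
    simp only [Finset.mem_range, not_lt] at hk
    rcases Nat.lt_or_ge i j with h | h
    · rw [Nat.choose_eq_zero_of_lt (show i < k by omega)]; ring
    · rw [Nat.choose_eq_zero_of_lt (show j < k by omega)]; ring

open Finset in
lemma S_rec {K : Type*} [Field K] (b : K) (i j : ℕ) :
    ∑ k ∈ range (min (i+1) (j+1) + 1), (((i+1).choose k : K) * ((j+1).choose k : K)) * b ^ k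
      = (∑ k ∈ Finset.range (min i (j+1) + 1), ((i.choose k : K) * ((j+1).choose k : K)) * b ^ k)
        + (∑ k ∈ Finset.range (min (i+1) j + 1), (((i+1).choose k : K) * (j.choose k : K)) * b ^ k)
        + (b - 1) * ∑ k ∈ range (min i j + 1), ((i.choose k : K) * (j.choose k : K)) * b ^ k := by
  set n := i + j + 2 with hn
  rw [S_ext b _ _ n (by omega), S_ext b _ _ n (by omega), S_ext b _ _ n (by omega),
    S_ext b _ _ n (by omega)]
  rw [Finset.mul_sum, ← Finset.sum_add_distrib, ← Finset.sum_add_distrib, ← sub_eq_zero,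
    ← Finset.sum_sub_distrib]
  have key : ∀ k ∈ range n,
      ((((i+1).choose k : K) * ((j+1).choose k : K)) * b ^ k
        - (((i.choose k : K) * ((j+1).choose k : K)) * b ^ k
          + (((i+1).choose k : K) * (j.choose k : K)) * b ^ k
          + (b - 1) * (((i.choose k : K) * (j.choose k : K)) * b ^ k)))
      = (fun m => if m = 0 then 0 else ((i.choose (m-1) : K) * (j.choose (m-1) : K)) * b ^ m) k
        - (fun m => if m = 0 then 0 else ((i.choose (m-1) : K) * (j.choose (m-1) : K)) * b ^ m) (k+1) := by
    intro k _
    rcases k with _ | k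
    · simp [Nat.choose]
    · simp only [Nat.add_sub_cancel, if_neg (Nat.succ_ne_zero _), if_neg (Nat.succ_ne_zero _)]
      have hp1 : ((i+1).choose (k+1) : K) = (i.choose (k+1) : K) + (i.choose k : K) := by
        rw [Nat.choose_succ_succ]; push_cast; ring
      have hp2 : ((j+1).choose (k+1) : K) = (j.choose (k+1) : K) + (j.choose k : K) := by
        rw [Nat.choose_succ_succ]; push_cast; ring
      rw [hp1, hp2]; ring
  rw [Finset.sum_congr rfl key, Finset.sum_range_sub']
  simp only [if_pos rfl]
  rw [Nat.choose_eq_zero_of_lt (show i < n - 1 by omega)]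
  simp

/-- The double generating function of the Lorentzian gravity transfer matrix
`T(g,a)_{i,j} = (ag)^{i+j} Σ_{k=0}^{min(i,j)} C(i,k) C(j,k) a^{-2k}` satisfies
`Σ T_{i,j} u^i v^j = 1/(1 - ga(u+v) - g²(1-a²)uv)`, stated multiplicatively. -/
theorem lorentzian_transfer_generating_function {K : Type*} [Field K]
    (g a : K) (ha : a ≠ 0) :
    let T : ℕ → ℕ → K := fun i j =>
      (a * g) ^ (i + j) *
        ∑ k ∈ Finset.range (min i j + 1),
          ((i.choose k : K) * (j.choose k : K)) * (a⁻¹) ^ (2 * k)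
    let F : MvPowerSeries (Fin 2) K := fun d => T (d 0) (d 1)
    let u : MvPowerSeries (Fin 2) K := MvPowerSeries.X 0
    let v : MvPowerSeries (Fin 2) K := MvPowerSeries.X 1
    F * (1 - (MvPowerSeries.C : K →+* MvPowerSeries (Fin 2) K) (g * a) * (u + v)
          - (MvPowerSeries.C : K →+* MvPowerSeries (Fin 2) K) (g ^ 2 * (1 - a ^ 2)) * (u * v)) = 1 := by
  intro T F u v
  have hCX : ∀ (c : K) (s : Fin 2),
      (MvPowerSeries.C : K →+* MvPowerSeries (Fin 2) K) c * MvPowerSeries.X s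
        = MvPowerSeries.monomial (σ := Fin 2) (R := K) (Finsupp.single s 1) c := by
    intro c s
    rw [X_def, ← monomial_zero_eq_C_apply, monomial_mul_monomial, zero_add, mul_one]
  have huv : (MvPowerSeries.C : K →+* MvPowerSeries (Fin 2) K) (g ^ 2 * (1 - a ^ 2)) * (u * v)
      = MvPowerSeries.monomial (σ := Fin 2) (R := K) (Finsupp.single 0 1 + Finsupp.single 1 1)
          (g ^ 2 * (1 - a ^ 2)) := by
    show (MvPowerSeries.C : K →+* MvPowerSeries (Fin 2) K) _ * (MvPowerSeries.X 0 * MvPowerSeries.X 1) = _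
    rw [X_def, X_def, ← monomial_zero_eq_C_apply, monomial_mul_monomial,
      monomial_mul_monomial, zero_add, mul_one, mul_one]
  have hexp : F * (1 - (MvPowerSeries.C : K →+* MvPowerSeries (Fin 2) K) (g * a) * (u + v)
          - (MvPowerSeries.C : K →+* MvPowerSeries (Fin 2) K) (g ^ 2 * (1 - a ^ 2)) * (u * v))
      = F - F * MvPowerSeries.monomial (σ := Fin 2) (R := K) (Finsupp.single 0 1) (g * a)
          - F * MvPowerSeries.monomial (σ := Fin 2) (R := K) (Finsupp.single 1 1) (g * a)
          - F * MvPowerSeries.monomial (σ := Fin 2) (R := K) (Finsupp.single 0 1 + Finsupp.single 1 1)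
              (g ^ 2 * (1 - a ^ 2)) := by
    rw [mul_sub, mul_sub, mul_one, huv, ← mul_assoc, mul_comm F ((MvPowerSeries.C : K →+* MvPowerSeries (Fin 2) K) (g*a)),
      mul_assoc, mul_add, mul_add, mul_left_comm ((MvPowerSeries.C : K →+* MvPowerSeries (Fin 2) K) (g*a)) F u,
      mul_left_comm ((MvPowerSeries.C : K →+* MvPowerSeries (Fin 2) K) (g*a)) F v, hCX, hCX]
    ring
  rw [hexp]
  ext d
  rw [map_sub, map_sub, map_sub, coeff_mul_monomial, coeff_mul_monomial, coeff_mul_monomial,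
    MvPowerSeries.coeff_one]
  have hF : ∀ d' : Fin 2 →₀ ℕ, MvPowerSeries.coeff d' F = T (d' 0) (d' 1) := fun _ => rfl
  have hc1 : (Finsupp.single (0 : Fin 2) 1 ≤ d) ↔ 1 ≤ d 0 := Finsupp.single_le_iff
  have hc2 : (Finsupp.single (1 : Fin 2) 1 ≤ d) ↔ 1 ≤ d 1 := Finsupp.single_le_iff
  have hc3 : (Finsupp.single (0 : Fin 2) 1 + Finsupp.single 1 1 ≤ d) ↔ (1 ≤ d 0 ∧ 1 ≤ d 1) := by
    rw [Finsupp.le_def]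
    constructor
    · intro h
      refine ⟨le_trans ?_ (h 0), le_trans ?_ (h 1)⟩ <;> simp
    · intro ⟨h0, h1⟩ s
      fin_cases s <;> simpa [Finsupp.single_apply]
  have hd0 : (d = 0) ↔ (d 0 = 0 ∧ d 1 = 0) := by
    constructor
    · intro h; simp [h]
    · intro ⟨h0, h1⟩; ext s; fin_cases s <;> simpa
  rw [hF, hF, hF, hF]
  simp only [Finsupp.tsub_apply, Finsupp.add_apply, Finsupp.single_apply, if_pos rfl, if_true,
    if_neg (show (0 : Fin 2) ≠ 1 by decide), if_neg (show (1 : Fin 2) ≠ 0 by decide),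
    Nat.sub_zero, Nat.add_zero, Nat.zero_add]
  by_cases h0 : 1 ≤ d 0 <;> by_cases h1 : 1 ≤ d 1
  · -- both positive
    rw [if_pos (hc1.2 h0), if_pos (hc2.2 h1), if_pos (hc3.2 ⟨h0, h1⟩),
      if_neg (show ¬ d = 0 by rw [hd0]; omega)]
    obtain ⟨i, hi⟩ : ∃ i, d 0 = i + 1 := ⟨d 0 - 1, by omega⟩
    obtain ⟨j, hj⟩ : ∃ j, d 1 = j + 1 := ⟨d 1 - 1, by omega⟩
    rw [hi, hj]
    simp only [Nat.add_sub_cancel]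
    unfold T
    simp only [pow_mul]
    rw [S_rec]
    have ha' : a⁻¹ * a = 1 := inv_mul_cancel₀ ha
    generalize (∑ k ∈ Finset.range (min i (j+1) + 1), ((i.choose k : K) * ((j+1).choose k : K)) * (a⁻¹^2) ^ k) = X
    generalize (∑ k ∈ Finset.range (min (i+1) j + 1), (((i+1).choose k : K) * (j.choose k : K)) * (a⁻¹^2) ^ k) = Y
    generalize (∑ k ∈ Finset.range (min i j + 1), ((i.choose k : K) * (j.choose k : K)) * (a⁻¹^2) ^ k) = Z
    rw [show i + 1 + (j + 1) = (i + j) + 2 by omega, show i + (j + 1) = (i + j) + 1 by omega,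
      show i + 1 + j = (i + j) + 1 by omega, pow_add, pow_add]
    linear_combination ((a*g)^(i+j) * g^2 * Z * (a⁻¹*a + 1)) * ha'
  · -- i ≥ 1, j = 0
    rw [if_pos (hc1.2 h0), if_neg (fun hh => h1 (hc2.1 hh)), if_neg (fun hh => h1 (hc3.1 hh).2),
      if_neg (show ¬ d = 0 by rw [hd0]; omega)]
    obtain ⟨i, hi⟩ : ∃ i, d 0 = i + 1 := ⟨d 0 - 1, by omega⟩
    have hj : d 1 = 0 := by omega
    rw [hi, hj]
    simp only [Nat.add_sub_cancel]
    unfold T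
    simp [pow_succ]
    ring
  · -- j ≥ 1, i = 0
    rw [if_pos (hc2.2 h1), if_neg (fun hh => h0 (hc1.1 hh)), if_neg (fun hh => h0 (hc3.1 hh).1),
      if_neg (show ¬ d = 0 by rw [hd0]; omega)]
    obtain ⟨j, hj⟩ : ∃ j, d 1 = j + 1 := ⟨d 1 - 1, by omega⟩
    have hi : d 0 = 0 := by omega
    rw [hi, hj]
    simp only [Nat.add_sub_cancel]
    unfold T
    simp [pow_succ]
    ring
  · -- both zero
    rw [if_neg (fun hh => h0 (hc1.1 hh)), if_neg (fun hh => h1 (hc2.1 hh)),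
      if_neg (fun hh => h0 (hc3.1 hh).1), if_pos (hd0.2 ⟨by omega, by omega⟩)]
    have hi : d 0 = 0 := by omega
    have hj : d 1 = 0 := by omega
    rw [hi, hj]
    unfold T
    simp
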